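/- The natural preorder of the period semiring is the pointwise natural preorder of K under timeslices: for all coalesced temporal K-elements k and k', k ≼_T k' if and only if τ_T(k) ≼_K τ_T(k') for every time point T. -/
import Mathlib


open scoped Classical

namespace TemporalK

variable {K : Type*}

/-- An interval over the time domain `{0, ..., N-1}`: a pair `(b, e)` with `b < e ≤ N`. -/
abbrev TInterval (N : ℕ) := {I : Fin (N + 1) × Fin (N + 1) // I.1 < I.2}

/-- A temporal `K`-element: a function assigning to each interval an element of `K`. -/
abbrev TempEl (N : ℕ) (K : Type*) := TInterval N → K

/-- The interval `I = (b, e)` contains the time point `T` iff `b ≤ T < e`. -/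
def Contains {N : ℕ} (I : TInterval N) (T : ℕ) : Prop :=
  (I.val.1 : ℕ) ≤ T ∧ T < (I.val.2 : ℕ)

/-- The timeslice of `𝒯` at time point `T`: the sum of `𝒯 I` over all intervals `I`
containing `T`. -/
noncomputable def slice {N : ℕ} [CommSemiring K] (𝒯 : TempEl N K) (T : ℕ) : K :=
  ∑ I ∈ Finset.univ.filter (fun I : TInterval N => Contains I T), 𝒯 I

/-- `T` is an (annotation) changepoint of `𝒯` iff `T = 0` or the timeslices at `T - 1`
and `T` differ. -/
def Changepoint {N : ℕ} [CommSemiring K] (𝒯 : TempEl N K) (T : ℕ) : Prop :=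
  T = 0 ∨ slice 𝒯 (T - 1) ≠ slice 𝒯 T

/-- `I = (b, e)` is a changepoint interval of `𝒯` iff `b` is a changepoint, `e` is a
changepoint or equals `N`, and no time point strictly between `b` and `e` is a changepoint. -/
def CPInterval {N : ℕ} [CommSemiring K] (𝒯 : TempEl N K) (I : TInterval N) : Prop :=
  Changepoint 𝒯 (I.val.1 : ℕ) ∧
    (Changepoint 𝒯 (I.val.2 : ℕ) ∨ (I.val.2 : ℕ) = N) ∧
    ∀ T : ℕ, (I.val.1 : ℕ) < T → T < (I.val.2 : ℕ) → ¬ Changepoint 𝒯 T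

/-- `K`-coalescing: maps changepoint intervals `(b, e)` to the timeslice at `b` and all
other intervals to `0`. -/
noncomputable def coal {N : ℕ} [CommSemiring K] (𝒯 : TempEl N K) : TempEl N K :=
  fun I => if CPInterval 𝒯 I then slice 𝒯 (I.val.1 : ℕ) else 0

/-- Snapshot equivalence: equal timeslices at every time point. -/
def SnapEq {N : ℕ} [CommSemiring K] (k k' : TempEl N K) : Prop :=
  ∀ T : ℕ, T < N → slice k T = slice k' T

/-- A temporal `K`-element is coalesced iff it is the `K`-coalescing of some
temporal `K`-element. -/
def Coalesced {N : ℕ} [CommSemiring K] (k : TempEl N K) : Prop :=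
  ∃ 𝒯 : TempEl N K, k = coal 𝒯

/-- Pointwise addition of temporal `K`-elements. -/
def padd {N : ℕ} [CommSemiring K] (k k' : TempEl N K) : TempEl N K :=
  fun I => k I + k' I

/-- Pointwise multiplication of temporal `K`-elements:
`(k ·_P k')(I) = Σ k(I')·k'(I'')` over all pairs `(I', I'')` whose intersection is
nonempty and equals `I`. -/
noncomputable def pmul {N : ℕ} [CommSemiring K] (k k' : TempEl N K) : TempEl N K :=
  fun I =>
    ∑ p ∈ Finset.univ.filter (fun p : TInterval N × TInterval N =>
        max (p.1.val.1 : ℕ) (p.2.val.1 : ℕ) < min (p.1.val.2 : ℕ) (p.2.val.2 : ℕ) ∧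
        (I.val.1 : ℕ) = max (p.1.val.1 : ℕ) (p.2.val.1 : ℕ) ∧
        (I.val.2 : ℕ) = min (p.1.val.2 : ℕ) (p.2.val.2 : ℕ)),
      k p.1 * k' p.2

/-- Addition of the period semiring: coalesced pointwise addition. -/
noncomputable def tadd {N : ℕ} [CommSemiring K] (k k' : TempEl N K) : TempEl N K :=
  coal (padd k k')

/-- Multiplication of the period semiring: coalesced pointwise multiplication. -/
noncomputable def tmul {N : ℕ} [CommSemiring K] (k k' : TempEl N K) : TempEl N K :=
  coal (pmul k k')

/-- The zero of the period semiring: maps every interval to `0`. -/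
def zeroT (N : ℕ) (K : Type*) [CommSemiring K] : TempEl N K := fun _ => 0

/-- The one of the period semiring: maps the interval `(0, N)` to `1` and every other
interval to `0`. -/
def oneT (N : ℕ) (K : Type*) [CommSemiring K] : TempEl N K :=
  fun I => if (I.val.1 : ℕ) = 0 ∧ (I.val.2 : ℕ) = N then 1 else 0

/-- Encoding of an annotation history `f : time points → K` as a coalesced temporal
`K`-element: coalesce the element assigning `f T` to each singleton interval `(T, T+1)`. -/
noncomputable def enc {N : ℕ} [CommSemiring K] (f : Fin N → K) : TempEl N K :=
  coal (fun I =>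
    if h : (I.val.2 : ℕ) = (I.val.1 : ℕ) + 1 then
      f ⟨(I.val.1 : ℕ), by have := I.val.2.isLt; omega⟩
    else 0)

/-- The natural preorder of the semiring `K`. -/
def nle [CommSemiring K] (a b : K) : Prop := ∃ c, a + c = b

/-- The natural preorder of the period semiring (on coalesced temporal `K`-elements). -/
def tle {N : ℕ} [CommSemiring K] (k k' : TempEl N K) : Prop :=
  ∃ k'' : TempEl N K, Coalesced k'' ∧ tadd k k'' = k'

/-- The pointwise monus: assigns `τ_T(k) −_K τ_T(k')` to each singleton interval
`(T, T+1)` and `0` to every non-singleton interval. -/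
noncomputable def pmonus {N : ℕ} [CommSemiring K] (monus : K → K → K)
    (k k' : TempEl N K) : TempEl N K :=
  fun I =>
    if (I.val.2 : ℕ) = (I.val.1 : ℕ) + 1 then
      monus (slice k (I.val.1 : ℕ)) (slice k' (I.val.1 : ℕ))
    else 0

/-- The monus of the period semiring: coalesced pointwise monus. -/
noncomputable def tmonus {N : ℕ} [CommSemiring K] (monus : K → K → K)
    (k k' : TempEl N K) : TempEl N K :=
  coal (pmonus monus k k')

end TemporalK

open TemporalK

section Aux

variable {K : Type*}

lemma slice_padd {N : ℕ} [CommSemiring K] (k k' : TempEl N K) (T : ℕ) :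
    slice (padd k k') T = slice k T + slice k' T := by
  simp [TemporalK.slice, padd, Finset.sum_add_distrib]

lemma slice_const {N : ℕ} [CommSemiring K] (𝒯 : TempEl N K) {b T : ℕ}
    (hb : b ≤ T) (h : ∀ S, b < S → S ≤ T → ¬ Changepoint 𝒯 S) :
    slice 𝒯 T = slice 𝒯 b := by
  induction T with
  | zero =>
    have hb0 : b = 0 := by omega
    rw [hb0]
  | succ T ih =>
    rcases Nat.lt_or_ge b (T + 1) with hb' | hb'
    · have hb2 : b ≤ T := by omega
      have hnc := h (T + 1) (by omega) le_rfl
      have heq : slice 𝒯 T = slice 𝒯 (T + 1) := by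
        by_contra hne
        exact hnc (Or.inr (by simpa using hne))
      rw [← heq]
      exact ih hb2 (fun S h1 h2 => h S h1 (by omega))
    · have : b = T + 1 := by omega
      rw [this]

lemma slice_eq_single {N : ℕ} [CommSemiring K] (f : TempEl N K) (T : ℕ)
    (I₀ : TInterval N) (h₀ : Contains I₀ T)
    (hz : ∀ I : TInterval N, Contains I T → I ≠ I₀ → f I = 0) :
    slice f T = f I₀ := by
  rw [TemporalK.slice]
  apply Finset.sum_eq_single_of_mem
  · simp [h₀]
  · intro I hI hne
    exact hz I (by simpa using hI) hne

lemma cp_unique {N : ℕ} [CommSemiring K] (𝒯 : TempEl N K) {T : ℕ}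
    {I J : TInterval N} (hI : CPInterval 𝒯 I) (hJ : CPInterval 𝒯 J)
    (hIT : Contains I T) (hJT : Contains J T) : I = J := by
  obtain ⟨⟨b, e⟩, hbe⟩ := I
  obtain ⟨⟨b', e'⟩, hbe'⟩ := J
  dsimp only [CPInterval, Contains] at hI hJ hIT hJT
  obtain ⟨hI1, hI2, hI3⟩ := hI
  obtain ⟨hJ1, hJ2, hJ3⟩ := hJ
  obtain ⟨hb, he⟩ := hIT
  obtain ⟨hb', he'⟩ := hJT
  have heN : (e : ℕ) ≤ N := by have := e.isLt; omega
  have heN' : (e' : ℕ) ≤ N := by have := e'.isLt; omega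
  have hbb : (b : ℕ) = (b' : ℕ) := by
    rcases Nat.lt_trichotomy (b : ℕ) (b' : ℕ) with h | h | h
    · exact absurd hJ1 (hI3 _ h (by omega))
    · exact h
    · exact absurd hI1 (hJ3 _ h (by omega))
  have hee : (e : ℕ) = (e' : ℕ) := by
    rcases Nat.lt_trichotomy (e : ℕ) (e' : ℕ) with h | h | h
    · rcases hI2 with hcp | hn
      · exact absurd hcp (hJ3 _ (by omega) h)
      · omega
    · exact h
    · rcases hJ2 with hcp | hn
      · exact absurd hcp (hI3 _ (by omega) h)
      · omega
  exact Subtype.ext (Prod.ext (Fin.ext hbb) (Fin.ext hee))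

lemma cp_exists {N : ℕ} [CommSemiring K] (𝒯 : TempEl N K) {T : ℕ} (hT : T < N) :
    ∃ I : TInterval N, CPInterval 𝒯 I ∧ Contains I T ∧
      slice 𝒯 T = slice 𝒯 ((I.val.1 : ℕ)) := by
  classical
  set b := Nat.findGreatest (fun S => Changepoint 𝒯 S) T with hbdef
  have hb0 : Changepoint 𝒯 0 := Or.inl rfl
  have hbcp : Changepoint 𝒯 b := Nat.findGreatest_spec (Nat.zero_le T) hb0
  have hbT : b ≤ T := Nat.findGreatest_le T
  have hbmax : ∀ S, b < S → S ≤ T → ¬ Changepoint 𝒯 S := by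
    intro S h1 h2
    exact Nat.findGreatest_is_greatest h1 h2
  have hEx : ∃ S, T < S ∧ (Changepoint 𝒯 S ∨ S = N) := ⟨N, hT, Or.inr rfl⟩
  set e := Nat.find hEx with hedef
  obtain ⟨hTe, hecp⟩ := Nat.find_spec hEx
  have heN : e ≤ N := Nat.find_min' hEx ⟨hT, Or.inr rfl⟩
  have hemin : ∀ S, S < e → ¬ (T < S ∧ (Changepoint 𝒯 S ∨ S = N)) :=
    fun S hS => Nat.find_min hEx hS
  have hbe : b < e := by omega
  refine ⟨⟨(⟨b, by omega⟩, ⟨e, by omega⟩), by simpa [Fin.mk_lt_mk] using hbe⟩, ?_, ?_, ?_⟩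
  · refine ⟨hbcp, hecp, ?_⟩
    intro S h1 h2
    rcases le_or_gt S T with h | h
    · exact hbmax S h1 h
    · intro hcp
      exact hemin S h2 ⟨h, Or.inl hcp⟩
  · exact ⟨hbT, hTe⟩
  · exact slice_const 𝒯 hbT hbmax

lemma slice_coal {N : ℕ} [CommSemiring K] (𝒯 : TempEl N K) {T : ℕ} (hT : T < N) :
    slice (coal 𝒯) T = slice 𝒯 T := by
  obtain ⟨I₀, hcp, hcon, hs⟩ := cp_exists 𝒯 hT
  rw [slice_eq_single (coal 𝒯) T I₀ hcon ?_]
  · rw [coal, if_pos hcp, ← hs]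
  · intro I hI hne
    rw [coal, if_neg]
    intro hcpI
    exact hne (cp_unique 𝒯 hcpI hcp hI hcon)

lemma coal_congr {N : ℕ} [CommSemiring K] {𝒯 𝒯' : TempEl N K}
    (h : ∀ T, T < N → slice 𝒯 T = slice 𝒯' T) : coal 𝒯 = coal 𝒯' := by
  have hc : ∀ S : ℕ, S < N → (Changepoint 𝒯 S ↔ Changepoint 𝒯' S) := by
    intro S hS
    unfold Changepoint
    rw [h S hS, h (S - 1) (by omega)]
  funext I
  obtain ⟨⟨b, e⟩, hbe⟩ := I
  have hbe' : (b : ℕ) < (e : ℕ) := hbe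
  have heN : (e : ℕ) ≤ N := by have := e.isLt; omega
  have hcN : ((Changepoint 𝒯 (e : ℕ) ∨ (e : ℕ) = N) ↔
      (Changepoint 𝒯' (e : ℕ) ∨ (e : ℕ) = N)) := by
    rcases eq_or_lt_of_le heN with h' | h'
    · simp [h']
    · rw [hc _ h']
  have hcp : CPInterval 𝒯 ⟨(b, e), hbe⟩ ↔ CPInterval 𝒯' ⟨(b, e), hbe⟩ := by
    unfold CPInterval
    dsimp only
    apply and_congr (hc _ (by omega))
    apply and_congr hcN
    refine forall_congr' fun S => ?_
    constructor
    · intro hh h1 h2 hcps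
      exact hh h1 h2 ((hc S (by omega)).mpr hcps)
    · intro hh h1 h2 hcps
      exact hh h1 h2 ((hc S (by omega)).mp hcps)
  simp only [coal]
  by_cases hI' : CPInterval 𝒯 ⟨(b, e), hbe⟩
  · rw [if_pos hI', if_pos (hcp.mp hI')]
    exact h _ (by omega)
  · rw [if_neg hI', if_neg (hcp.not.mp hI')]

lemma slice_sing {N : ℕ} [CommSemiring K] (c : ℕ → K) {T : ℕ} (hT : T < N) :
    slice (fun I : TInterval N =>
      if (I.val.2 : ℕ) = (I.val.1 : ℕ) + 1 then c (I.val.1 : ℕ) else 0) T = c T := by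
  have h1 : T < N + 1 := by omega
  have h2 : T + 1 < N + 1 := by omega
  have h0 : Contains (⟨(⟨T, h1⟩, ⟨T + 1, h2⟩), by simp [Fin.mk_lt_mk]⟩ : TInterval N) T :=
    ⟨le_rfl, by simp⟩
  rw [slice_eq_single _ T _ h0 ?_]
  · simp
  · intro I hI hne
    rw [if_neg]
    intro heq
    apply hne
    obtain ⟨hb, he⟩ := hI
    have hb' : (I.val.1 : ℕ) = T := by omega
    exact Subtype.ext (Prod.ext (Fin.ext hb') (Fin.ext (by simp; omega)))

end Aux


theorem tle_iff_pointwise_nle {N : ℕ} (hN : 1 ≤ N) {K : Type*} [CommSemiring K]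
    (k k' : TempEl N K) (hk : Coalesced k) (hk' : Coalesced k') :
    tle k k' ↔ ∀ T : ℕ, T < N → nle (slice k T) (slice k' T) := by
  constructor
  · rintro ⟨k'', ⟨𝒮, rfl⟩, hadd⟩ T hT
    refine ⟨slice (coal 𝒮) T, ?_⟩
    rw [← slice_padd, ← slice_coal (padd k (coal 𝒮)) hT]
    show slice (tadd k (coal 𝒮)) T = slice k' T
    rw [hadd]
  · intro h
    have hex : ∀ T : ℕ, ∃ cc : K, T < N → slice k T + cc = slice k' T := by
      intro T
      by_cases hT : T < N
      · obtain ⟨cc, hcc⟩ := h T hT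
        exact ⟨cc, fun _ => hcc⟩
      · exact ⟨0, fun hT' => absurd hT' hT⟩
    choose c hc using hex
    refine ⟨coal (fun I : TInterval N =>
      if (I.val.2 : ℕ) = (I.val.1 : ℕ) + 1 then c (I.val.1 : ℕ) else 0),
      ⟨_, rfl⟩, ?_⟩
    obtain ⟨𝒯', rfl⟩ := hk'
    rw [tadd]
    apply coal_congr
    intro T hT
    rw [slice_padd, slice_coal _ hT, slice_sing c hT, hc T hT]
    exact slice_coal 𝒯' hT
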